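/- arXiv:math/0610888 — 3 statements merged into one kernel-verified Lean document; each statement's English description precedes it below -/
import Mathlib

section
/- Let T₁ and T₂ be commuting bounded operators on a complex Hilbert space H such that the pair (T₁,T₂) is jointly hyponormal, and suppose that for some integers m ≥ 1 and n ≥ 1 the pair (T₁^m, T₂^n) is normal, i.e., T₁^m and T₂^n are commuting normal operators. Then (T₁,T₂) is a normal pair: T₁ and T₂ are normal and commute. -/
open MeasureTheory ContinuousLinearMap
open scoped ComplexOrder ENNReal

noncomputable section

universe u

/-- A pair `(T₁, T₂)` of bounded operators on a complex Hilbert space is (jointly)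
hyponormal if `Σ_{i,j∈{1,2}} ⟨(T_j*T_i − T_iT_j*)h_j, h_i⟩ ≥ 0` for all `h₁, h₂`. -/
def JointlyHyponormal {H : Type u} [NormedAddCommGroup H] [InnerProductSpace ℂ H]
    [CompleteSpace H] (T₁ T₂ : H →L[ℂ] H) : Prop :=
  ∀ h₁ h₂ : H,
    0 ≤ (inner ℂ (((adjoint T₁).comp T₁ - T₁.comp (adjoint T₁)) h₁) h₁ : ℂ)
      + (inner ℂ (((adjoint T₂).comp T₁ - T₁.comp (adjoint T₂)) h₂) h₁ : ℂ)
      + (inner ℂ (((adjoint T₁).comp T₂ - T₂.comp (adjoint T₁)) h₁) h₂ : ℂ)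
      + (inner ℂ (((adjoint T₂).comp T₂ - T₂.comp (adjoint T₂)) h₂) h₂ : ℂ)

/-- A bounded operator `T` on a complex Hilbert space `H` is subnormal if there are a
complex Hilbert space `K`, an isometry `V : H → K` and a normal operator `N` on `K`
with `N V = V T`. -/
def Subnormal {H : Type u} [NormedAddCommGroup H] [InnerProductSpace ℂ H]
    (T : H →L[ℂ] H) : Prop :=
  ∃ (K : Type u) (_ : NormedAddCommGroup K) (_ : InnerProductSpace ℂ K)
    (_ : CompleteSpace K) (V : H →L[ℂ] K) (N : K →L[ℂ] K),
    Isometry V ∧ (adjoint N).comp N = N.comp (adjoint N) ∧ N.comp V = V.comp T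

/-- A pair `(T₁, T₂)` is subnormal if it lifts to a commuting pair of normal operators. -/
def SubnormalPair {H : Type u} [NormedAddCommGroup H] [InnerProductSpace ℂ H]
    (T₁ T₂ : H →L[ℂ] H) : Prop :=
  ∃ (K : Type u) (_ : NormedAddCommGroup K) (_ : InnerProductSpace ℂ K)
    (_ : CompleteSpace K) (V : H →L[ℂ] K) (N₁ N₂ : K →L[ℂ] K),
    Isometry V ∧ N₁.comp N₂ = N₂.comp N₁ ∧
    (adjoint N₁).comp N₁ = N₁.comp (adjoint N₁) ∧
    (adjoint N₂).comp N₂ = N₂.comp (adjoint N₂) ∧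
    N₁.comp V = V.comp T₁ ∧ N₂.comp V = V.comp T₂

/-- `μ` is the Berger measure of the unilateral weighted shift with weights `c` :
a compactly supported Borel probability measure on `[0,∞)` whose `n`-th moment is
`c₀² ⋯ c_{n-1}²`. -/
def IsBergerMeasure (c : ℕ → ℝ) (μ : Measure ℝ) : Prop :=
  IsProbabilityMeasure μ ∧ μ {t | t < 0} = 0 ∧ (∃ M : ℝ, μ {t | M < t} = 0) ∧
    ∀ n : ℕ, 1 ≤ n → ∫ t, t ^ n ∂μ = ∏ i ∈ Finset.range n, (c i) ^ 2



open NormedSpace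

section Fuglede

variable {A : Type*} [NormedRing A] [StarRing A] [CStarRing A] [NormedAlgebra ℂ A]
  [CompleteSpace A] [StarModule ℂ A]

lemma exp_mul_exp_neg (S : A) : exp S * exp (-S) = 1 := by
  letI : NormedAlgebra ℚ A := NormedAlgebra.restrictScalars ℚ ℂ A
  rw [← exp_add_of_commute (Commute.refl S).neg_right, add_neg_cancel, exp_zero]

lemma norm_exp_skew {S : A} (hS : star S = -S) : ‖exp S‖ * ‖exp S‖ = ‖(1 : A)‖ := by
  letI : NormedAlgebra ℚ A := NormedAlgebra.restrictScalars ℚ ℂ A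
  rw [← CStarRing.norm_star_mul_self, star_exp, hS, ← exp_add_of_commute (Commute.refl S).neg_left,
    neg_add_cancel, exp_zero]

/-- **Fuglede's theorem**. -/
lemma fuglede_mul {N T : A} (hN : star N * N = N * star N) (hc : T * N = N * T) :
    T * star N = star N * T := by
  letI : NormedAlgebra ℚ A := NormedAlgebra.restrictScalars ℚ ℂ A
  have hdiffexp : Differentiable ℂ (fun z : ℂ => exp (z • star N)) := fun z =>
    (hasDerivAt_exp_smul_const (𝕂 := ℂ) (star N) z).differentiableAt
  set f : ℂ → A := fun z => exp (z • star N) * T * exp ((-z) • star N) with hf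
  have hdiff : Differentiable ℂ f := by
    apply Differentiable.mul
    · exact hdiffexp.mul (differentiable_const T)
    · exact hdiffexp.comp differentiable_neg
  have hbound : ∀ z : ℂ, ‖f z‖ ≤ ‖T‖ * ‖(1 : A)‖ := by
    intro z
    set a : A := z • star N with ha
    set b : A := (starRingEnd ℂ z) • N with hb
    have hstar_a : star a = b := by simp [ha, hb, star_smul]
    have hstar_b : star b = a := by simp [ha, hb, star_smul]
    have hcab : Commute a b := by
      show a * b = b * a
      simp only [ha, hb, smul_mul_smul_comm]
      rw [← hN, mul_comm (z : ℂ)]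
    have hstarS : star (a - b) = -(a - b) := by
      rw [star_sub, hstar_a, hstar_b, neg_sub]
    have hTb : Commute T b := by
      refine Commute.smul_right ?_ _
      exact hc
    -- u = exp (a - b)
    have hdecomp : f z = exp (a - b) * T * exp (b - a) := by
      have h1 : exp (a - b) = exp a * exp (-b) := by
        rw [sub_eq_add_neg, exp_add_of_commute hcab.neg_right]
      have h2 : exp (b - a) = exp b * exp (-a) := by
        rw [sub_eq_add_neg, exp_add_of_commute (hcab.symm.neg_right)]
      have hTbexp : exp (-b) * T = T * exp (-b) := (hTb.neg_right.symm.exp_left)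
      have hnb : exp (-b) * exp b = 1 := by simpa using exp_mul_exp_neg (-b)
      rw [h1, h2, hf]
      simp only [neg_smul, ← ha]
      symm
      calc exp a * exp (-b) * T * (exp b * exp (-a))
          = exp a * (exp (-b) * T) * (exp b * exp (-a)) := by rw [mul_assoc (exp a)]
        _ = exp a * (T * exp (-b)) * (exp b * exp (-a)) := by rw [hTbexp]
        _ = exp a * T * (exp (-b) * (exp b * exp (-a))) := by simp only [mul_assoc]
        _ = exp a * T * exp (-a) := by rw [← mul_assoc (exp (-b)), hnb, one_mul]
    rw [hdecomp]
    have hu := norm_exp_skew hstarS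
    have hu' : star (exp (a - b)) = exp (b - a) := by
      rw [star_exp, hstarS, neg_sub]
    calc ‖exp (a - b) * T * exp (b - a)‖
        ≤ ‖exp (a - b) * T‖ * ‖exp (b - a)‖ := norm_mul_le _ _
      _ ≤ ‖exp (a - b)‖ * ‖T‖ * ‖exp (b - a)‖ :=
          mul_le_mul_of_nonneg_right (norm_mul_le _ _) (norm_nonneg _)
      _ = ‖T‖ * (‖exp (a - b)‖ * ‖exp (a - b)‖) := by
          rw [← hu', norm_star]; ring
      _ = ‖T‖ * ‖(1 : A)‖ := by rw [hu]
  have hrange : Bornology.IsBounded (Set.range f) := by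
    rw [isBounded_iff_forall_norm_le]
    exact ⟨‖T‖ * ‖(1 : A)‖, by rintro x ⟨z, rfl⟩; exact hbound z⟩
  have hconst : ∀ z : ℂ, f z = T := by
    intro z
    have h0 : f 0 = T := by simp [hf, exp_zero]
    rw [← h0]
    exact hdiff.apply_eq_apply_of_bounded hrange z 0
  have hcomm_exp : ∀ z : ℂ, exp (z • star N) * T = T * exp (z • star N) := by
    intro z
    have := hconst z
    have h1 : exp ((-z) • star N) * exp (z • star N) = 1 := by
      rw [neg_smul, ← exp_mul_exp_neg (-(z • star N))]; simp
    calc exp (z • star N) * T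
        = exp (z • star N) * T * (exp ((-z) • star N) * exp (z • star N)) := by
          rw [h1, mul_one]
      _ = f z * exp (z • star N) := by rw [hf]; simp only [mul_assoc]
      _ = T * exp (z • star N) := by rw [this]
  -- differentiate at 0
  have hg : HasDerivAt (fun z : ℂ => exp (z • star N) * T)
      ((exp ((0:ℂ) • star N) * star N) * T) 0 :=
    (hasDerivAt_exp_smul_const (𝕂 := ℂ) (star N) 0).mul_const T
  have hh : HasDerivAt (fun z : ℂ => T * exp (z • star N))
      (T * (exp ((0:ℂ) • star N) * star N)) 0 :=
    (hasDerivAt_exp_smul_const (𝕂 := ℂ) (star N) 0).const_mul T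
  have heq : (fun z : ℂ => exp (z • star N) * T) = fun z : ℂ => T * exp (z • star N) :=
    funext hcomm_exp
  rw [heq] at hg
  have := hg.unique hh
  simpa [exp_zero] using this.symm

end Fuglede
section CommuteCfc

variable {A : Type*} [TopologicalSpace A] [Ring A] [StarRing A] [Algebra ℝ A]
  [IsTopologicalRing A] [T2Space A]
  [ClosedEmbeddingContinuousFunctionalCalculus ℝ A (IsSelfAdjoint : A → Prop)]

lemma commute_cfc {a b : A} (ha : IsSelfAdjoint a) (hab : Commute b a) (f : ℝ → ℝ) :
    Commute b (cfc f a) := by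
  by_cases hf : ContinuousOn f (spectrum ℝ a)
  · rw [cfc_apply f a ha hf]
    have hcs : CompactSpace (spectrum ℝ a) :=
      ContinuousFunctionalCalculus.compactSpace_spectrum (R := ℝ) a
    generalize (⟨_, hf.restrict⟩ : C(spectrum ℝ a, ℝ)) = g
    let S : Subalgebra ℝ C(spectrum ℝ a, ℝ) :=
      { carrier := {g | Commute b (cfcHom ha g)}
        mul_mem' := fun {g h} hg hh => by
          simpa only [Set.mem_setOf_eq, map_mul] using hg.mul_right hh
        one_mem' := by
          simp only [Set.mem_setOf_eq, map_one]; exact Commute.one_right b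
        add_mem' := fun {g h} hg hh => by
          simpa only [Set.mem_setOf_eq, map_add] using hg.add_right hh
        zero_mem' := by
          simp only [Set.mem_setOf_eq, map_zero]; exact Commute.zero_right b
        algebraMap_mem' := fun r => by
          simpa only [Set.mem_setOf_eq, AlgHomClass.commutes] using
            (show Commute b (algebraMap ℝ A r) from (Algebra.commutes r b).symm) }
    have hcont : Continuous (cfcHom ha (R := ℝ)) := (cfcHom_isClosedEmbedding ha).continuous
    have hS_closed : IsClosed (S : Set C(spectrum ℝ a, ℝ)) := by
      have heq : (S : Set C(spectrum ℝ a, ℝ)) =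
          (fun g : C(spectrum ℝ a, ℝ) => b * cfcHom ha g - cfcHom ha g * b) ⁻¹' {0} := by
        ext g
        simp only [SetLike.mem_coe, Set.mem_preimage, Set.mem_singleton_iff, sub_eq_zero]
        rfl
      rw [heq]
      exact IsClosed.preimage
        ((continuous_const.mul hcont).sub (hcont.mul continuous_const)) isClosed_singleton
    have hid : ContinuousMap.restrict (spectrum ℝ a) (ContinuousMap.id ℝ) ∈ S := by
      show Commute b (cfcHom ha _)
      rw [cfcHom_id ha]
      exact hab
    have hpoly : polynomialFunctions (spectrum ℝ a) ≤ S := by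
      rw [polynomialFunctions.eq_adjoin_X]
      apply Algebra.adjoin_le
      rintro g hg
      rw [Set.mem_singleton_iff] at hg
      subst hg
      rw [Polynomial.toContinuousMapOnAlgHom_apply, Polynomial.toContinuousMapOn_X_eq_restrict_id]
      exact hid
    have hg_mem : g ∈ closure ((polynomialFunctions (spectrum ℝ a)) : Set C(spectrum ℝ a, ℝ)) := by
      rw [← Subalgebra.topologicalClosure_coe, polynomialFunctions.topologicalClosure]
      trivial
    have : g ∈ (S : Set C(spectrum ℝ a, ℝ)) := by
      have h2 := closure_mono (show ((polynomialFunctions (spectrum ℝ a)) : Set C(spectrum ℝ a, ℝ))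
        ⊆ (S : Set C(spectrum ℝ a, ℝ)) from hpoly) hg_mem
      rwa [hS_closed.closure_eq] at h2
    exact this
  · rw [cfc_apply_of_not_continuousOn a hf]
    exact Commute.zero_right b

end CommuteCfc
open ContinuousLinearMap
open scoped InnerProductSpace

section Hilbert

variable {H : Type} [NormedAddCommGroup H] [InnerProductSpace ℂ H] [CompleteSpace H]

lemma star_mul_self_inner (A : H →L[ℂ] H) (x : H) :
    (⟪(star A * A) x, x⟫_ℂ) = (‖A x‖ : ℂ) ^ 2 := by
  rw [ContinuousLinearMap.mul_apply, ContinuousLinearMap.star_eq_adjoint,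
    ContinuousLinearMap.adjoint_inner_left, inner_self_eq_norm_sq_to_K]
  norm_cast

lemma mul_star_self_inner (A : H →L[ℂ] H) (x : H) :
    (⟪(A * star A) x, x⟫_ℂ) = (‖(star A) x‖ : ℂ) ^ 2 := by
  have h := star_mul_self_inner (star A) x
  rwa [star_star] at h

/-- pointwise hyponormality -/
def Hypo (T : H →L[ℂ] H) : Prop := ∀ x, ‖(star T) x‖ ≤ ‖T x‖

lemma hypo_sq {T : H →L[ℂ] H} (hT : Hypo T) (y : H) :
    ‖T y‖ ^ 2 ≤ ‖T (T y)‖ * ‖y‖ := by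
  have h1 : (⟪T y, T y⟫_ℂ) = ⟪(star T) (T y), y⟫_ℂ := by
    rw [ContinuousLinearMap.star_eq_adjoint, ContinuousLinearMap.adjoint_inner_left]
  calc ‖T y‖ ^ 2 = ‖(⟪T y, T y⟫_ℂ)‖ := by
        rw [inner_self_eq_norm_sq_to_K, norm_pow]
        norm_cast
        rw [abs_of_nonneg (norm_nonneg _)]
    _ = ‖(⟪(star T) (T y), y⟫_ℂ)‖ := by rw [h1]
    _ ≤ ‖(star T) (T y)‖ * ‖y‖ := norm_inner_le_norm _ _
    _ ≤ ‖T (T y)‖ * ‖y‖ := mul_le_mul_of_nonneg_right (hT (T y)) (norm_nonneg _)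

lemma hypo_ker {T : H →L[ℂ] H} (hT : Hypo T) :
    ∀ k, ∀ y : H, (T ^ (k + 1)) y = 0 → T y = 0 := by
  have ker2 : ∀ y : H, T (T y) = 0 → T y = 0 := by
    intro y h
    have := hypo_sq hT y
    rw [h, norm_zero, zero_mul] at this
    have h2 : ‖T y‖ = 0 := by nlinarith [norm_nonneg (T y)]
    simpa [norm_eq_zero] using h2
  intro k
  induction k with
  | zero => intro y h; simpa using h
  | succ k ih =>
    intro y h
    have h2 : T (T ((T ^ k) y)) = 0 := by
      have e : (T ^ (k + 1 + 1)) y = T (T ((T ^ k) y)) := by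
        rw [pow_succ', pow_succ']
        simp [ContinuousLinearMap.mul_apply]
      rwa [e] at h
    have h3 : (T ^ (k + 1)) y = 0 := by
      have e : (T ^ (k + 1)) y = T ((T ^ k) y) := by
        rw [pow_succ']; simp [ContinuousLinearMap.mul_apply]
      rw [e]
      exact ker2 _ h2
    exact ih y h3

lemma pow_succ_apply (T : H →L[ℂ] H) (k : ℕ) (y : H) :
    (T ^ (k + 1)) y = T ((T ^ k) y) := by
  rw [pow_succ']; simp [ContinuousLinearMap.mul_apply]

lemma hypo_B {T : H →L[ℂ] H} (hT : Hypo T) :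
    ∀ k, ∀ y : H, ‖T y‖ * ‖(T ^ (k + 1)) y‖ ≤ ‖(T ^ (k + 2)) y‖ * ‖y‖ := by
  intro k
  induction k with
  | zero =>
    intro y
    have := hypo_sq hT y
    have e1 : (T ^ 1) y = T y := by simp
    have e2 : (T ^ 2) y = T (T y) := by rw [pow_succ_apply]; simp
    rw [e1, e2]
    nlinarith [this]
  | succ k ih =>
    intro y
    by_cases h0 : (T ^ (k + 1)) y = 0
    · have hTy : T y = 0 := hypo_ker hT k y h0
      simp [hTy]
    · have hpos : 0 < ‖(T ^ (k + 1)) y‖ := norm_pos_iff.mpr h0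
      have key : ‖(T ^ (k + 2)) y‖ ^ 2 ≤ ‖(T ^ (k + 3)) y‖ * ‖(T ^ (k + 1)) y‖ := by
        have := hypo_sq hT ((T ^ (k + 1)) y)
        have e1 : T ((T ^ (k + 1)) y) = (T ^ (k + 2)) y := (pow_succ_apply T (k + 1) y).symm
        have e2 : T (T ((T ^ (k + 1)) y)) = (T ^ (k + 3)) y := by
          rw [e1]; exact (pow_succ_apply T (k + 2) y).symm
        rwa [e2, e1] at this
      have ihy := ih y
      -- goal : ‖T y‖ * ‖T^(k+2) y‖ ≤ ‖T^(k+3) y‖ * ‖y‖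
      nlinarith [norm_nonneg (T y), norm_nonneg ((T ^ (k + 2)) y), norm_nonneg y,
        norm_nonneg ((T ^ (k + 3)) y), mul_le_mul_of_nonneg_right ihy
          (norm_nonneg ((T ^ (k + 2)) y))]

lemma hypo_paranormal {T : H →L[ℂ] H} (hT : Hypo T) :
    ∀ k, ∀ y : H, ‖T y‖ ^ (k + 1) ≤ ‖(T ^ (k + 1)) y‖ * ‖y‖ ^ k := by
  intro k
  induction k with
  | zero => intro y; simp
  | succ k ih =>
    intro y
    have ihy := ih y
    have hB := hypo_B hT k y
    calc ‖T y‖ ^ (k + 2) = ‖T y‖ ^ (k + 1) * ‖T y‖ := by ring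
      _ ≤ (‖(T ^ (k + 1)) y‖ * ‖y‖ ^ k) * ‖T y‖ :=
          mul_le_mul_of_nonneg_right ihy (norm_nonneg _)
      _ = (‖T y‖ * ‖(T ^ (k + 1)) y‖) * ‖y‖ ^ k := by ring
      _ ≤ (‖(T ^ (k + 2)) y‖ * ‖y‖) * ‖y‖ ^ k :=
          mul_le_mul_of_nonneg_right hB (by positivity)
      _ = ‖(T ^ (k + 2)) y‖ * ‖y‖ ^ (k + 1) := by ring

lemma hypo_contraction {T : H →L[ℂ] H} (hT : Hypo T) {m : ℕ} (hm : 1 ≤ m)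
    (hc : ∀ y : H, ‖(T ^ m) y‖ ≤ ‖y‖) : ∀ y : H, ‖T y‖ ≤ ‖y‖ := by
  intro y
  obtain ⟨k, rfl⟩ : ∃ k, m = k + 1 := ⟨m - 1, by omega⟩
  have h1 := hypo_paranormal hT k y
  have h2 : ‖(T ^ (k + 1)) y‖ * ‖y‖ ^ k ≤ ‖y‖ * ‖y‖ ^ k :=
    mul_le_mul_of_nonneg_right (hc y) (by positivity)
  have h3 : ‖T y‖ ^ (k + 1) ≤ ‖y‖ ^ (k + 1) := by
    calc ‖T y‖ ^ (k + 1) ≤ ‖(T ^ (k + 1)) y‖ * ‖y‖ ^ k := h1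
      _ ≤ ‖y‖ * ‖y‖ ^ k := h2
      _ = ‖y‖ ^ (k + 1) := by ring
  exact le_of_pow_le_pow_left₀ (by omega) (norm_nonneg _) h3

end Hilbert
section Core

variable {H : Type} [NormedAddCommGroup H] [InnerProductSpace ℂ H] [CompleteSpace H]

lemma re_le_norm' (z : ℂ) : z.re ≤ ‖z‖ :=
  le_trans (le_abs_self _) (RCLike.abs_re_le_norm z)

set_option maxHeartbeats 1600000 in
lemma normal_of_hypo_normal_pow {T : H →L[ℂ] H} (hT : Hypo T) {m : ℕ} (hm : 1 ≤ m)
    (hN : star (T ^ m) * T ^ m = T ^ m * star (T ^ m)) :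
    star T * T = T * star T := by
  have hm' : (0:ℝ) < (m:ℝ) := by exact_mod_cast hm
  set G : H →L[ℂ] H := star (T ^ m) * T ^ m with hGdef
  have hT_pow_comm : T * T ^ m = T ^ m * T := ((Commute.refl T).pow_right m).eq
  have hFug : T * star (T ^ m) = star (T ^ m) * T := fuglede_mul hN hT_pow_comm
  have hFug' : star T * T ^ m = T ^ m * star T := by
    have h := congrArg star hFug
    simp only [star_mul, star_star] at h
    exact h.symm
  have hG_sa : IsSelfAdjoint G := by
    rw [hGdef]; exact IsSelfAdjoint.star_mul_self _
  have hG_nonneg : (0 : H →L[ℂ] H) ≤ G := star_mul_self_nonneg _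
  have hspec : ∀ t ∈ spectrum ℝ G, 0 ≤ t := fun t ht =>
    spectrum_nonneg_of_nonneg hG_nonneg ht
  have hTG : Commute T G := by
    show T * G = G * T
    calc T * (star (T ^ m) * T ^ m) = (T * star (T ^ m)) * T ^ m := by rw [mul_assoc]
      _ = star (T ^ m) * (T * T ^ m) := by rw [hFug, mul_assoc]
      _ = star (T ^ m) * (T ^ m * T) := by rw [hT_pow_comm]
      _ = G * T := by rw [← mul_assoc]
  have hTsG : Commute (star T) G := by
    show star T * G = G * star T
    have h := congrArg star hTG.eq
    simp only [star_mul, hG_sa.star_eq] at h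
    exact h.symm
  -- main pointwise estimate
  have key : ∀ x : H, ∀ δ : ℝ, 0 < δ →
      ‖T x‖ ^ 2 - ‖(star T) x‖ ^ 2 ≤ δ ^ ((m:ℝ)⁻¹) * ‖x‖ ^ 2 := by
    intro x δ hδ
    have hpos : ∀ t ∈ spectrum ℝ G, 0 < t + δ := fun t ht => by
      have := hspec t ht; linarith
    have hcont : ∀ q : ℝ, ContinuousOn (fun t : ℝ => (t + δ) ^ q) (spectrum ℝ G) := by
      intro q
      exact (continuousOn_id.add continuousOn_const).rpow_const
        (fun t ht => Or.inl (ne_of_gt (hpos t ht)))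
    have cfc_rpow_mul : ∀ q r : ℝ,
        cfc (fun t : ℝ => (t + δ) ^ q) G * cfc (fun t : ℝ => (t + δ) ^ r) G
          = cfc (fun t : ℝ => (t + δ) ^ (q + r)) G := by
      intro q r
      rw [← cfc_mul _ _ G (hcont q) (hcont r)]
      exact cfc_congr fun t ht => (Real.rpow_add (hpos t ht) q r).symm
    set p' : ℝ := (2 * (m:ℝ))⁻¹ with hp'
    set C : H →L[ℂ] H := cfc (fun t : ℝ => (t + δ) ^ (-p')) G with hC
    set C' : H →L[ℂ] H := cfc (fun t : ℝ => (t + δ) ^ p') G with hC'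
    have hC_sa : IsSelfAdjoint C := cfc_predicate _ G
    have hC'_sa : IsSelfAdjoint C' := cfc_predicate _ G
    have hTC : Commute T C := commute_cfc hG_sa hTG _
    have hTsC : Commute (star T) C := commute_cfc hG_sa hTsG _
    have hGC : Commute G C := commute_cfc hG_sa (Commute.refl G) _
    have hCC' : C * C' = 1 := by
      rw [hC, hC', cfc_rpow_mul (-p') p']
      have heq1 : (fun t : ℝ => (t + δ) ^ (-p' + p')) = fun _ : ℝ => (1:ℝ) := by
        funext t
        rw [neg_add_cancel, Real.rpow_zero]
      rw [heq1]
      exact cfc_const_one ℝ G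
    have hCm : C ^ m = cfc (fun t : ℝ => (t + δ) ^ (-(2:ℝ)⁻¹)) G := by
      rw [hC, ← cfc_pow _ m G (hcont (-p'))]
      refine cfc_congr fun t ht => ?_
      rw [← Real.rpow_natCast ((t + δ) ^ (-p')) m, ← Real.rpow_mul (hpos t ht).le]
      congr 1
      rw [hp']
      have hm0 : (m:ℝ) ≠ 0 := ne_of_gt hm'
      field_simp
    have hCmCm : C ^ m * C ^ m = cfc (fun t : ℝ => (t + δ) ^ (-1:ℝ)) G := by
      rw [hCm, cfc_rpow_mul]
      norm_num
    set K : H →L[ℂ] H := G * (C ^ m * C ^ m) with hKdef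
    have hK : K = cfc (fun t : ℝ => t * (t + δ) ^ (-1:ℝ)) G := by
      rw [hKdef, hCmCm,
        cfc_mul (fun t : ℝ => t) (fun t : ℝ => (t + δ) ^ (-1:ℝ)) G continuousOn_id
          (hcont (-1:ℝ)),
        cfc_id' ℝ G hG_sa]
    have hK_norm : ‖K‖ ≤ 1 := by
      rw [hK]
      refine norm_cfc_le zero_le_one fun t ht => ?_
      have h1 : 0 < t + δ := hpos t ht
      have h2 : 0 ≤ t := hspec t ht
      rw [Real.rpow_neg_one, Real.norm_eq_abs, abs_of_nonneg (by positivity)]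
      rw [mul_inv_le_iff₀ h1, one_mul]
      linarith
    set X : H →L[ℂ] H := T * C with hX
    have hXapp : ∀ y, X y = T (C y) := fun y => rfl
    have hXstar_app : ∀ y, (star X) y = (star T) (C y) := by
      intro y
      have h1 : star X = C * star T := by rw [hX, star_mul, hC_sa.star_eq]
      have h2 : C * star T = star T * C := hTsC.symm.eq
      rw [h1, h2]; rfl
    have hXhypo : Hypo X := by
      intro y
      rw [hXapp, hXstar_app]
      exact hT (C y)
    have hXm : X ^ m = T ^ m * C ^ m := hTC.mul_pow m
    have hXm_star : star (X ^ m) = C ^ m * star (T ^ m) := by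
      rw [hXm, star_mul, (hC_sa.pow m).star_eq]
    have hCmG : Commute (C ^ m) G := (hGC.symm).pow_left m
    have hKop : star (X ^ m) * X ^ m = K := by
      rw [hXm_star, hXm, hKdef]
      calc C ^ m * star (T ^ m) * (T ^ m * C ^ m)
          = C ^ m * (star (T ^ m) * T ^ m) * C ^ m := by simp only [mul_assoc]
        _ = C ^ m * G * C ^ m := by rw [← hGdef]
        _ = G * (C ^ m * C ^ m) := by rw [hCmG.eq, mul_assoc]
    have hstarTmC : Commute (star (T ^ m)) (C ^ m) := by
      rw [star_pow]
      exact (hTsC.pow_left m).pow_right m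
    have hKop2 : X ^ m * star (X ^ m) = K := by
      rw [hXm_star, hXm, hKdef]
      calc T ^ m * C ^ m * (C ^ m * star (T ^ m))
          = T ^ m * ((C ^ m * C ^ m) * star (T ^ m)) := by simp only [mul_assoc]
        _ = T ^ m * (star (T ^ m) * (C ^ m * C ^ m)) := by
            rw [(hstarTmC.mul_right hstarTmC).symm.eq]
        _ = (T ^ m * star (T ^ m)) * (C ^ m * C ^ m) := by simp only [mul_assoc]
        _ = G * (C ^ m * C ^ m) := by rw [← hN]
    have hXm_le : ∀ y : H, ‖(X ^ m) y‖ ≤ ‖y‖ := by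
      intro y
      have h1 : (inner ℂ ((star (X ^ m) * X ^ m) y) y : ℂ) = (‖(X ^ m) y‖ : ℂ) ^ 2 :=
        star_mul_self_inner (X ^ m) y
      rw [hKop] at h1
      have h2 : ‖(X ^ m) y‖ ^ 2 = (inner ℂ (K y) y : ℂ).re := by
        rw [show (inner ℂ (K y) y : ℂ) = (inner ℂ (K y) y : ℂ) from rfl]
        rw [show (inner ℂ (K y) y : ℂ) = (‖(X ^ m) y‖ : ℂ) ^ 2 from h1]
        norm_cast
      have h3 : (inner ℂ (K y) y : ℂ).re ≤ ‖K y‖ * ‖y‖ :=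
        le_trans (re_le_norm' _) (norm_inner_le_norm _ _)
      have h4 : ‖K y‖ ≤ ‖y‖ := by
        calc ‖K y‖ ≤ ‖K‖ * ‖y‖ := K.le_opNorm y
          _ ≤ 1 * ‖y‖ := mul_le_mul_of_nonneg_right hK_norm (norm_nonneg _)
          _ = ‖y‖ := one_mul _
      have h5 : ‖(X ^ m) y‖ ^ 2 ≤ ‖y‖ ^ 2 := by
        rw [h2]
        nlinarith [norm_nonneg y]
      exact le_of_pow_le_pow_left₀ two_ne_zero (norm_nonneg y) h5
    have hX_le : ∀ y : H, ‖X y‖ ≤ ‖y‖ := hypo_contraction hXhypo hm hXm_le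
    have hXnorm : ‖X‖ ≤ 1 := X.opNorm_le_bound zero_le_one (fun y => by
      simpa [one_mul] using hX_le y)
    have hCC'x : ∀ y : H, C (C' y) = y := by
      intro y
      have h : (C * C') y = (1 : H →L[ℂ] H) y := by rw [hCC']
      simpa [ContinuousLinearMap.mul_apply] using h
    -- (a)
    have hE1 : C' * C' = cfc (fun t : ℝ => (t + δ) ^ ((m:ℝ)⁻¹)) G := by
      rw [hC', cfc_rpow_mul p' p']
      have : p' + p' = (m:ℝ)⁻¹ := by
        rw [hp', ← two_mul, mul_inv, ← mul_assoc, mul_inv_cancel₀ two_ne_zero, one_mul]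
      rw [this]
    have ha : ‖T x‖ ^ 2 ≤ (inner ℂ ((C' * C') x) x : ℂ).re := by
      have h0 : X (C' x) = T x := by rw [hXapp, hCC'x]
      have h1 : ‖T x‖ ≤ ‖C' x‖ := by rw [← h0]; exact hX_le (C' x)
      have h2 : (inner ℂ ((star C' * C') x) x : ℂ) = (‖C' x‖ : ℂ) ^ 2 :=
        star_mul_self_inner C' x
      rw [hC'_sa.star_eq] at h2
      have h3 : (inner ℂ ((C' * C') x) x : ℂ).re = ‖C' x‖ ^ 2 := by
        rw [h2]; norm_cast
      rw [h3]
      exact pow_le_pow_left₀ (norm_nonneg _) h1 2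
    -- (b)
    set W : H →L[ℂ] H := star X with hW
    have hW_le : ∀ y : H, ‖W y‖ ≤ ‖y‖ := by
      intro y
      calc ‖W y‖ ≤ ‖W‖ * ‖y‖ := W.le_opNorm y
        _ = ‖X‖ * ‖y‖ := by rw [hW, norm_star]
        _ ≤ 1 * ‖y‖ := mul_le_mul_of_nonneg_right hXnorm (norm_nonneg _)
        _ = ‖y‖ := one_mul _
    have hWpow_le : ∀ k : ℕ, ∀ y : H, ‖(W ^ k) y‖ ≤ ‖y‖ := by
      intro k
      induction k with
      | zero => intro y; simp
      | succ k ih =>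
        intro y
        rw [pow_succ_apply]
        exact le_trans (by
          have := hW_le ((W ^ k) y)
          -- careful: pow_succ_apply gives W ((W^k) y); we need ‖W (W^k y)‖ ≤ ‖W^k y‖ ≤ ‖y‖
          exact this) (ih y)
    have hWm_le : ∀ y : H, ‖(W ^ m) y‖ ≤ ‖W y‖ := by
      intro y
      obtain ⟨k, rfl⟩ : ∃ k, m = k + 1 := ⟨m - 1, by omega⟩
      have h : (W ^ (k + 1)) y = (W ^ k) (W y) := by rw [pow_succ]; rfl
      rw [h]
      exact hWpow_le k (W y)
    have hWm_sq : ∀ y : H, ‖(W ^ m) y‖ ^ 2 = (inner ℂ (K y) y : ℂ).re := by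
      intro y
      have h1 : (inner ℂ ((X ^ m * star (X ^ m)) y) y : ℂ) = (‖(star (X ^ m)) y‖ : ℂ) ^ 2 :=
        mul_star_self_inner (X ^ m) y
      rw [hKop2] at h1
      have h2 : (W ^ m) y = (star (X ^ m)) y := by rw [hW, ← star_pow]
      rw [h2, show (inner ℂ (K y) y : ℂ) = (‖(star (X ^ m)) y‖ : ℂ) ^ 2 from h1]
      norm_cast
    have hE2 : C' * K * C' = cfc (fun t : ℝ => t * (t + δ) ^ ((m:ℝ)⁻¹ - 1)) G := by
      rw [hC', hK]
      have hmul1 : ContinuousOn (fun t : ℝ => t * (t + δ) ^ (-1:ℝ)) (spectrum ℝ G) :=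
        continuousOn_id.mul (hcont (-1:ℝ))
      rw [← cfc_mul _ _ G (hcont p') hmul1]
      have hmul2 : ContinuousOn (fun t : ℝ => (t + δ) ^ p' * (t * (t + δ) ^ (-1:ℝ)))
          (spectrum ℝ G) := (hcont p').mul hmul1
      rw [← cfc_mul _ _ G hmul2 (hcont p')]
      refine cfc_congr fun t ht => ?_
      have h1 : 0 < t + δ := hpos t ht
      have hm0 : (m:ℝ) ≠ 0 := ne_of_gt hm'
      have : (m:ℝ)⁻¹ - 1 = p' + -1 + p' := by rw [hp']; field_simp; ring
      rw [this, Real.rpow_add h1, Real.rpow_add h1]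
      ring
    have hb : (inner ℂ ((C' * K * C') x) x : ℂ).re ≤ ‖(star T) x‖ ^ 2 := by
      have h1 : W (C' x) = (star T) x := by rw [hW, hXstar_app, hCC'x]
      have h2 : (inner ℂ ((C' * K * C') x) x : ℂ) = (inner ℂ (K (C' x)) (C' x) : ℂ) := by
        rw [ContinuousLinearMap.mul_apply, ContinuousLinearMap.mul_apply]
        rw [show C' (K (C' x)) = ContinuousLinearMap.adjoint C' (K (C' x)) by
          rw [hC'_sa.adjoint_eq]]
        rw [ContinuousLinearMap.adjoint_inner_left]
      have h3 : (inner ℂ (K (C' x)) (C' x) : ℂ).re = ‖(W ^ m) (C' x)‖ ^ 2 :=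
        (hWm_sq (C' x)).symm
      rw [h2, h3]
      have h4 : ‖(W ^ m) (C' x)‖ ≤ ‖(star T) x‖ := by
        rw [← h1]; exact hWm_le (C' x)
      exact pow_le_pow_left₀ (norm_nonneg _) h4 2
    -- (c)
    have hE1E2 : C' * C' - C' * K * C'
        = cfc (fun t : ℝ => (t + δ) ^ ((m:ℝ)⁻¹) - t * (t + δ) ^ ((m:ℝ)⁻¹ - 1)) G := by
      rw [hE1, hE2, cfc_sub _ _ G (hcont ((m:ℝ)⁻¹))
        (show ContinuousOn (fun t : ℝ => t * (t + δ) ^ ((m:ℝ)⁻¹ - 1)) (spectrum ℝ G) from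
          continuousOn_id.mul (hcont ((m:ℝ)⁻¹ - 1)))]
    have hdiff_norm : ‖C' * C' - C' * K * C'‖ ≤ δ ^ ((m:ℝ)⁻¹) := by
      rw [hE1E2]
      refine norm_cfc_le (Real.rpow_nonneg hδ.le _) fun t ht => ?_
      have h1 : 0 < t + δ := hpos t ht
      have ht0 : 0 ≤ t := hspec t ht
      have hsplit : (t + δ) ^ ((m:ℝ)⁻¹) = (t + δ) * (t + δ) ^ ((m:ℝ)⁻¹ - 1) := by
        have e : (t + δ) * (t + δ) ^ ((m:ℝ)⁻¹ - 1) = (t + δ) ^ (1:ℝ) * (t + δ) ^ ((m:ℝ)⁻¹ - 1) := by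
          rw [Real.rpow_one]
        rw [e, ← Real.rpow_add h1]
        congr 1
        ring
      have hkey : (t + δ) ^ ((m:ℝ)⁻¹) - t * (t + δ) ^ ((m:ℝ)⁻¹ - 1)
          = δ * (t + δ) ^ ((m:ℝ)⁻¹ - 1) := by
        rw [hsplit]; ring
      rw [hkey, Real.norm_eq_abs,
        abs_of_nonneg (by positivity)]
      have hexp : (m:ℝ)⁻¹ - 1 ≤ 0 := by
        have : (m:ℝ)⁻¹ ≤ 1 := by
          rw [inv_le_one_iff₀]
          right
          exact_mod_cast hm
        linarith
      calc δ * (t + δ) ^ ((m:ℝ)⁻¹ - 1) ≤ δ * δ ^ ((m:ℝ)⁻¹ - 1) := by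
            refine mul_le_mul_of_nonneg_left ?_ hδ.le
            exact Real.rpow_le_rpow_of_nonpos hδ (by linarith) hexp
        _ = δ ^ ((m:ℝ)⁻¹) := by
            have e : δ * δ ^ ((m:ℝ)⁻¹ - 1) = δ ^ (1:ℝ) * δ ^ ((m:ℝ)⁻¹ - 1) := by
              rw [Real.rpow_one]
            rw [e, ← Real.rpow_add hδ]
            congr 1
            ring
    -- assemble
    have hfin : (inner ℂ ((C' * C' - C' * K * C') x) x : ℂ).re ≤ δ ^ ((m:ℝ)⁻¹) * ‖x‖ ^ 2 := by
      calc (inner ℂ ((C' * C' - C' * K * C') x) x : ℂ).re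
          ≤ ‖(inner ℂ ((C' * C' - C' * K * C') x) x : ℂ)‖ := re_le_norm' _
        _ ≤ ‖(C' * C' - C' * K * C') x‖ * ‖x‖ := norm_inner_le_norm _ _
        _ ≤ (‖C' * C' - C' * K * C'‖ * ‖x‖) * ‖x‖ :=
            mul_le_mul_of_nonneg_right ((C' * C' - C' * K * C').le_opNorm x) (norm_nonneg _)
        _ ≤ (δ ^ ((m:ℝ)⁻¹) * ‖x‖) * ‖x‖ := by
            have := mul_le_mul_of_nonneg_right hdiff_norm (norm_nonneg x)
            exact mul_le_mul_of_nonneg_right this (norm_nonneg x)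
        _ = δ ^ ((m:ℝ)⁻¹) * ‖x‖ ^ 2 := by ring
    have hsub : (inner ℂ ((C' * C' - C' * K * C') x) x : ℂ).re
        = (inner ℂ ((C' * C') x) x : ℂ).re - (inner ℂ ((C' * K * C') x) x : ℂ).re := by
      rw [ContinuousLinearMap.sub_apply, inner_sub_left, Complex.sub_re]
    linarith [ha, hb, hfin, hsub.symm.le, hsub.le]
  -- δ → 0
  have hzero : ∀ x : H, ‖T x‖ ^ 2 - ‖(star T) x‖ ^ 2 = 0 := by
    intro x
    have hge : 0 ≤ ‖T x‖ ^ 2 - ‖(star T) x‖ ^ 2 := by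
      have := hT x
      nlinarith [norm_nonneg ((star T) x), norm_nonneg (T x)]
    refine le_antisymm ?_ hge
    by_contra hcon
    push_neg at hcon
    set r := ‖T x‖ ^ 2 - ‖(star T) x‖ ^ 2 with hr
    have hx : 0 < ‖x‖ ^ 2 := by
      rcases eq_or_lt_of_le (norm_nonneg x) with h | h
      · exfalso
        have h1 := key x 1 one_pos
        rw [← h, ← hr] at h1
        simp at h1
        linarith
      · positivity
    set b : ℝ := r / (2 * ‖x‖ ^ 2) with hb
    have hbpos : 0 < b := by positivity
    set δ : ℝ := b ^ (m:ℝ) with hδdef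
    have hδpos : 0 < δ := Real.rpow_pos_of_pos hbpos _
    have hδpow : δ ^ ((m:ℝ)⁻¹) = b := by
      rw [hδdef, ← Real.rpow_mul hbpos.le, mul_inv_cancel₀ (ne_of_gt hm'), Real.rpow_one]
    have h1 := key x δ hδpos
    rw [hδpow, ← hr] at h1
    have h2 : b * ‖x‖ ^ 2 = r / 2 := by
      rw [hb, div_mul_eq_mul_div, div_eq_div_iff (mul_pos two_pos hx).ne' two_ne_zero]; ring
    rw [h2] at h1
    linarith
  -- conclude
  have hinner : ∀ x : H, (inner ℂ ((star T * T - T * star T) x) x : ℂ) = 0 := by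
    intro x
    rw [ContinuousLinearMap.sub_apply, inner_sub_left, star_mul_self_inner,
      mul_star_self_inner]
    have h := hzero x
    have : ((‖T x‖ : ℂ) ^ 2 - (‖(star T) x‖ : ℂ) ^ 2) = ((‖T x‖ ^ 2 - ‖(star T) x‖ ^ 2 : ℝ) : ℂ) := by
      push_cast
      ring
    rw [this, h]
    norm_num
  have hD0 : star T * T - T * star T = 0 := by
    have h := (inner_map_self_eq_zero ((star T * T - T * star T : H →L[ℂ] H) : H →ₗ[ℂ] H)).mp
      (fun x => hinner x)
    exact ContinuousLinearMap.coe_injective h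
  exact sub_eq_zero.mp hD0
  
end Core

section Bridge

variable {H : Type} [NormedAddCommGroup H] [InnerProductSpace ℂ H] [CompleteSpace H]

lemma hypo_of_inner {T : H →L[ℂ] H}
    (h : ∀ x : H, 0 ≤ (inner ℂ (((adjoint T).comp T - T.comp (adjoint T)) x) x : ℂ)) :
    Hypo T := by
  intro x
  have hx := h x
  have hop : (adjoint T).comp T - T.comp (adjoint T) = star T * T - T * star T := by
    rw [ContinuousLinearMap.star_eq_adjoint]
    rfl
  rw [hop, ContinuousLinearMap.sub_apply, inner_sub_left, star_mul_self_inner,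
    mul_star_self_inner] at hx
  have hcast : ((‖T x‖ : ℂ) ^ 2 - (‖(star T) x‖ : ℂ) ^ 2)
      = ((‖T x‖ ^ 2 - ‖(star T) x‖ ^ 2 : ℝ) : ℂ) := by
    push_cast
    ring
  rw [hcast] at hx
  have hre : (0:ℝ) ≤ ‖T x‖ ^ 2 - ‖(star T) x‖ ^ 2 := by
    rw [show (0:ℂ) = ((0:ℝ):ℂ) by norm_num, Complex.real_le_real] at hx
    exact hx
  have : ‖(star T) x‖ ^ 2 ≤ ‖T x‖ ^ 2 := by linarith
  exact le_of_pow_le_pow_left₀ two_ne_zero (norm_nonneg _) this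

end Bridge

/-- Proposition 4.1: a jointly hyponormal pair with a normal power pair is normal. -/
theorem normal_of_hyponormal_with_normal_powers
    {H : Type} [NormedAddCommGroup H] [InnerProductSpace ℂ H] [CompleteSpace H]
    (T₁ T₂ : H →L[ℂ] H) (hcomm : T₁ * T₂ = T₂ * T₁)
    (hhypo : JointlyHyponormal T₁ T₂) (m n : ℕ) (hm : 1 ≤ m) (hn : 1 ≤ n)
    (hpowcomm : T₁ ^ m * T₂ ^ n = T₂ ^ n * T₁ ^ m)
    (hN₁ : adjoint (T₁ ^ m) * T₁ ^ m = T₁ ^ m * adjoint (T₁ ^ m))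
    (hN₂ : adjoint (T₂ ^ n) * T₂ ^ n = T₂ ^ n * adjoint (T₂ ^ n)) :
    adjoint T₁ * T₁ = T₁ * adjoint T₁ ∧ adjoint T₂ * T₂ = T₂ * adjoint T₂ ∧
      T₁ * T₂ = T₂ * T₁ := by
  have h1 : Hypo T₁ := by
    apply hypo_of_inner
    intro x
    have h := hhypo x 0
    simpa using h
  have h2 : Hypo T₂ := by
    apply hypo_of_inner
    intro x
    have h := hhypo 0 x
    simpa using h
  rw [← ContinuousLinearMap.star_eq_adjoint] at hN₁ hN₂
  have n1 := normal_of_hypo_normal_pow h1 hm hN₁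
  have n2 := normal_of_hypo_normal_pow h2 hn hN₂
  rw [ContinuousLinearMap.star_eq_adjoint] at n1 n2
  exact ⟨n1, n2, hcomm⟩

end
end

section
/- Let U₊ be the unilateral (unweighted) shift on ℓ²(ℤ₊) and consider the operators T₁ := U₊ ⊕ 0 and T₂ := 0 ⊕ U₊ on H := ℓ²(ℤ₊) ⊕ ℓ²(ℤ₊), where 0 denotes the zero operator. Then T₁ and T₂ commute, the pair (T₁,T₂) is subnormal, and for all m ≥ 1, n ≥ 1 the operator T₁^m T₂^n (= 0) is normal; nevertheless (T₁,T₂) is not a normal pair (indeed T₁ is not normal). -/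
open MeasureTheory ContinuousLinearMap
open scoped ComplexOrder ENNReal

noncomputable section

universe u

namespace SubAux

open Function

local notation "⟪" x ", " y "⟫" => @inner ℂ _ _ x y

variable {α β : Type}

lemma summable_norm_sq (f : lp (fun _ : β => ℂ) 2) :
    Summable fun b => ‖f b‖ ^ (2 : ℝ≥0∞).toReal :=
  (lp.memℓp f).summable (by norm_num)

lemma memℓp_comp_equiv (σ : β ≃ β) (f : lp (fun _ : β => ℂ) 2) :
    Memℓp (fun b => f (σ b)) 2 := by
  apply memℓp_gen
  have := (σ.summable_iff (f := fun b => ‖f b‖ ^ (2 : ℝ≥0∞).toReal)).2 (summable_norm_sq f)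
  exact this

/-- Composition with an equiv of the index set, as a linear isometry of `ℓ²`. -/
def lpC (σ : β ≃ β) : lp (fun _ : β => ℂ) 2 →ₗᵢ[ℂ] lp (fun _ : β => ℂ) 2 where
  toFun f := ⟨fun b => f (σ b), memℓp_comp_equiv σ f⟩
  map_add' f g := by
    apply lp.ext; funext b
    simp [lp.coeFn_add]
    rfl
  map_smul' c f := by
    apply lp.ext; funext b
    simp [lp.coeFn_smul]
  norm_map' f := by
    rw [lp.norm_eq_tsum_rpow (by norm_num : 0 < (2:ℝ≥0∞).toReal),
      lp.norm_eq_tsum_rpow (by norm_num : 0 < (2:ℝ≥0∞).toReal) f]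
    congr 1
    refine Equiv.tsum_eq (α := ℝ) σ (fun b => ‖f b‖ ^ (2:ℝ≥0∞).toReal)

def lpCL (σ : β ≃ β) : lp (fun _ : β => ℂ) 2 →L[ℂ] lp (fun _ : β => ℂ) 2 :=
  (lpC σ).toContinuousLinearMap

@[simp] lemma lpCL_apply (σ : β ≃ β) (f : lp (fun _ : β => ℂ) 2) (b : β) :
    lpCL σ f b = f (σ b) := rfl


/-- Multiplication by the indicator function of `P`. -/
def lpIndFun (P : β → Bool) (f : lp (fun _ : β => ℂ) 2) : ∀ _ : β, ℂ :=
  fun b => if P b then f b else 0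

lemma lpInd_term_le (P : β → Bool) (f : lp (fun _ : β => ℂ) 2) (b : β) :
    ‖lpIndFun P f b‖ ^ (2 : ℝ≥0∞).toReal ≤ ‖f b‖ ^ (2 : ℝ≥0∞).toReal := by
  unfold lpIndFun
  cases hP : P b
  · rw [if_neg (by simp)]
    rw [norm_zero, Real.zero_rpow (by norm_num)]
    positivity
  · simp

lemma memℓp_ind (P : β → Bool) (f : lp (fun _ : β => ℂ) 2) :
    Memℓp (lpIndFun P f) 2 := by
  apply memℓp_gen
  exact Summable.of_nonneg_of_le (fun b => by positivity) (lpInd_term_le P f)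
    (summable_norm_sq f)

def lpIndL (P : β → Bool) : lp (fun _ : β => ℂ) 2 →L[ℂ] lp (fun _ : β => ℂ) 2 :=
  LinearMap.mkContinuous
    { toFun := fun f => ⟨lpIndFun P f, memℓp_ind P f⟩
      map_add' := fun f g => by
        apply lp.ext; funext b
        show (if P b then (f + g) b else 0) = _
        by_cases hP : P b <;> simp [lpIndFun, lp.coeFn_add, hP] <;>
          show _ = lpIndFun P f b + lpIndFun P g b <;> simp [lpIndFun, hP]
      map_smul' := fun c f => by
        apply lp.ext; funext b
        show (if P b then (c • f) b else 0) = _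
        by_cases hP : P b <;> simp [lpIndFun, lp.coeFn_smul, hP] }
    1
    (fun f => by
      rw [one_mul]
      refine lp.norm_le_of_tsum_le (by norm_num : 0 < (2:ℝ≥0∞).toReal) (norm_nonneg f) ?_
      rw [lp.norm_rpow_eq_tsum (by norm_num : 0 < (2:ℝ≥0∞).toReal) f]
      refine Summable.tsum_le_tsum (fun b => ?_) ?_ (summable_norm_sq f)
      · exact lpInd_term_le P f b
      exact Summable.of_nonneg_of_le (fun b => by positivity) (lpInd_term_le P f)
        (summable_norm_sq f))

@[simp] lemma lpIndL_apply (P : β → Bool) (f : lp (fun _ : β => ℂ) 2) (b : β) :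
    lpIndL P f b = if P b then f b else 0 := rfl


lemma norm_sq_extend {g : α → β} (hg : Injective g) (f : lp (fun _ : α => ℂ) 2) :
    (fun b => ‖Function.extend g (⇑f) 0 b‖ ^ (2 : ℝ≥0∞).toReal)
      = Function.extend g (fun a => ‖f a‖ ^ (2 : ℝ≥0∞).toReal) 0 := by
  funext b
  by_cases h : ∃ a, g a = b
  · obtain ⟨a, rfl⟩ := h
    rw [hg.extend_apply, hg.extend_apply]
  · rw [Function.extend_apply' _ _ _ h, Function.extend_apply' _ _ _ h]
    simp only [Pi.zero_apply, norm_zero]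
    rw [Real.zero_rpow (by norm_num)]

lemma memℓp_extend {g : α → β} (hg : Injective g) (f : lp (fun _ : α => ℂ) 2) :
    Memℓp (Function.extend g (⇑f) 0) 2 := by
  apply memℓp_gen
  rw [norm_sq_extend hg f]
  exact (summable_extend_zero hg).2 (summable_norm_sq f)

/-- Extension by zero along an injective map, as a linear isometry of `ℓ²` spaces. -/
def lpE {g : α → β} (hg : Injective g) :
    lp (fun _ : α => ℂ) 2 →ₗᵢ[ℂ] lp (fun _ : β => ℂ) 2 where
  toFun f := ⟨Function.extend g (⇑f) 0, memℓp_extend hg f⟩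
  map_add' f g' := by
    apply lp.ext; funext b
    show Function.extend g (⇑(f + g')) 0 b = _
    by_cases h : ∃ a, g a = b
    · obtain ⟨a, rfl⟩ := h
      simp [hg.extend_apply, lp.coeFn_add]
      show _ = Function.extend g (⇑f) 0 (g a) + Function.extend g (⇑g') 0 (g a)
      exact (hg.extend_apply _ _ _).trans
        (congrArg₂ (· + ·) (hg.extend_apply (⇑f) 0 a).symm (hg.extend_apply (⇑g') 0 a).symm)
    · rw [Function.extend_apply' _ _ _ h]
      show (0 : ℂ) = Function.extend g (⇑f) 0 b + Function.extend g (⇑g') 0 b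
      rw [Function.extend_apply' _ _ _ h, Function.extend_apply' _ _ _ h]
      simp
  map_smul' c f := by
    apply lp.ext; funext b
    show Function.extend g (⇑(c • f)) 0 b = _
    by_cases h : ∃ a, g a = b
    · obtain ⟨a, rfl⟩ := h
      simp [hg.extend_apply, lp.coeFn_smul]
    · rw [Function.extend_apply' _ _ _ h]
      show (0 : ℂ) = c • Function.extend g (⇑f) 0 b
      rw [Function.extend_apply' _ _ _ h]
      simp
  norm_map' f := by
    rw [lp.norm_eq_tsum_rpow (by norm_num : 0 < (2:ℝ≥0∞).toReal),
      lp.norm_eq_tsum_rpow (by norm_num : 0 < (2:ℝ≥0∞).toReal) f]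
    congr 1
    show ∑' b, ‖Function.extend g (⇑f) 0 b‖ ^ (2 : ℝ≥0∞).toReal = _
    rw [norm_sq_extend hg f]
    exact tsum_extend_zero hg _

@[simp] lemma lpE_apply {g : α → β} (hg : Injective g) (f : lp (fun _ : α => ℂ) 2) (b : β) :
    lpE hg f b = Function.extend g (⇑f) 0 b := rfl

lemma single_coord [DecidableEq β] (i j : β) (c : ℂ) :
    (lp.single 2 i c : lp (fun _ : β => ℂ) 2) j = if j = i then c else 0 := by
  by_cases h : j = i
  · subst h; rw [lp.single_apply_self, if_pos rfl]
  · rw [lp.single_apply_ne _ _ _ h, if_neg h]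

lemma lpE_single [DecidableEq α] [DecidableEq β] {g : α → β} (hg : Injective g) (i : α) (c : ℂ) :
    lpE hg (lp.single 2 i c) = lp.single 2 (g i) c := by
  apply lp.ext; funext b
  show Function.extend g (⇑(lp.single 2 i c)) 0 b = _
  by_cases h : ∃ a, g a = b
  · obtain ⟨a, rfl⟩ := h
    rw [hg.extend_apply, single_coord, single_coord]
    simp [hg.eq_iff]
  · rw [Function.extend_apply' _ _ _ h]
    rw [single_coord, if_neg (fun hc => h ⟨i, hc.symm⟩)]
    rfl

lemma lpCL_single [DecidableEq β] (σ : β ≃ β) (i : β) (c : ℂ) :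
    lpCL σ (lp.single 2 i c) = lp.single 2 (σ.symm i) c := by
  apply lp.ext; funext b
  show (lp.single 2 i c : lp (fun _ : β => ℂ) 2) (σ b) = _
  rw [single_coord, single_coord]
  congr 1
  simp [Equiv.eq_symm_apply]

lemma adjoint_lpIndL (P : β → Bool) : adjoint (lpIndL (β := β) P) = lpIndL P := by
  refine ((ContinuousLinearMap.eq_adjoint_iff _ _).2 fun f g => ?_).symm
  rw [lp.inner_eq_tsum, lp.inner_eq_tsum]
  refine tsum_congr fun b => ?_
  cases hP : P b <;> simp [hP]

lemma adjoint_lpCL (σ : β ≃ β) : adjoint (lpCL σ) = lpCL σ.symm := by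
  refine ((ContinuousLinearMap.eq_adjoint_iff _ _).2 fun f g => ?_).symm
  rw [lp.inner_eq_tsum, lp.inner_eq_tsum]
  refine Eq.trans ?_ (Equiv.tsum_eq (α := ℂ) σ.symm (fun b => ⟪f b, (lpCL σ g) b⟫))
  refine tsum_congr fun b => ?_
  simp


/-! ### The concrete construction on `ℓ²(ℤ ⊕ ℤ)` -/

/-- shift on the left summand. -/
def σL : (ℤ ⊕ ℤ) ≃ (ℤ ⊕ ℤ) := (Equiv.addRight (1 : ℤ)).sumCongr (Equiv.refl ℤ)

/-- shift on the right summand. -/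
def σR : (ℤ ⊕ ℤ) ≃ (ℤ ⊕ ℤ) := (Equiv.refl ℤ).sumCongr (Equiv.addRight (1 : ℤ))

@[simp] lemma σL_inl (n : ℤ) : σL (.inl n) = .inl (n + 1) := rfl
@[simp] lemma σL_inr (n : ℤ) : σL (.inr n) = .inr n := rfl
@[simp] lemma σR_inl (n : ℤ) : σR (.inl n) = .inl n := rfl
@[simp] lemma σR_inr (n : ℤ) : σR (.inr n) = .inr (n + 1) := rfl
@[simp] lemma σL_symm_inl (n : ℤ) : σL.symm (.inl n) = .inl (n - 1) := rfl
@[simp] lemma σL_symm_inr (n : ℤ) : σL.symm (.inr n) = .inr n := rfl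
@[simp] lemma σR_symm_inl (n : ℤ) : σR.symm (.inl n) = .inl n := rfl
@[simp] lemma σR_symm_inr (n : ℤ) : σR.symm (.inr n) = .inr (n - 1) := rfl

/-- The ambient Hilbert space `ℓ²(ℤ ⊕ ℤ)`. -/
abbrev K0 : Type := lp (fun _ : ℤ ⊕ ℤ => ℂ) 2

def QL : K0 →L[ℂ] K0 := lpIndL Sum.isLeft
def QR : K0 →L[ℂ] K0 := lpIndL Sum.isRight
def N₁ : K0 →L[ℂ] K0 := (lpCL σL.symm).comp QL
def N₂ : K0 →L[ℂ] K0 := (lpCL σR.symm).comp QR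

lemma adjoint_N₁ : adjoint N₁ = QL.comp (lpCL σL) := by
  rw [N₁, ContinuousLinearMap.adjoint_comp]
  unfold QL
  rw [adjoint_lpIndL, adjoint_lpCL, Equiv.symm_symm]

lemma adjoint_N₂ : adjoint N₂ = QR.comp (lpCL σR) := by
  rw [N₂, ContinuousLinearMap.adjoint_comp]
  unfold QR
  rw [adjoint_lpIndL, adjoint_lpCL, Equiv.symm_symm]

lemma N₁_comm_N₂ : N₁.comp N₂ = N₂.comp N₁ := by
  ext f b
  rcases b with n | n <;>
    simp [N₁, N₂, QL, QR]

lemma N₁_normal : (adjoint N₁).comp N₁ = N₁.comp (adjoint N₁) := by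
  rw [adjoint_N₁]
  ext f b
  rcases b with n | n <;>
    simp [N₁, QL]

lemma N₂_normal : (adjoint N₂).comp N₂ = N₂.comp (adjoint N₂) := by
  rw [adjoint_N₂]
  ext f b
  rcases b with n | n <;>
    simp [N₂, QR]

lemma N₁_single_inl (n : ℤ) (c : ℂ) :
    N₁ (lp.single 2 (.inl n) c) = lp.single 2 (.inl (n + 1)) c := by
  classical
  rw [N₁, ContinuousLinearMap.comp_apply]
  have h1 : QL (lp.single 2 (.inl n) c) = lp.single 2 (Sum.inl n) c := by
    apply lp.ext; funext b
    rcases b with m | m <;>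
      simp [QL, single_coord]
  rw [h1, lpCL_single, Equiv.symm_symm, σL_inl]

lemma N₁_single_inr (n : ℤ) (c : ℂ) : N₁ (lp.single 2 (.inr n) c) = 0 := by
  classical
  rw [N₁, ContinuousLinearMap.comp_apply]
  have h1 : QL (lp.single 2 (Sum.inr n) c) = 0 := by
    apply lp.ext; funext b
    rcases b with m | m <;>
      simp [QL, single_coord, lp.coeFn_zero]
  rw [h1, map_zero]

lemma N₂_single_inr (n : ℤ) (c : ℂ) :
    N₂ (lp.single 2 (.inr n) c) = lp.single 2 (.inr (n + 1)) c := by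
  classical
  rw [N₂, ContinuousLinearMap.comp_apply]
  have h1 : QR (lp.single 2 (Sum.inr n) c) = lp.single 2 (Sum.inr n) c := by
    apply lp.ext; funext b
    rcases b with m | m <;>
      simp [QR, single_coord]
  rw [h1, lpCL_single, Equiv.symm_symm, σR_inr]

lemma N₂_single_inl (n : ℤ) (c : ℂ) : N₂ (lp.single 2 (.inl n) c) = 0 := by
  classical
  rw [N₂, ContinuousLinearMap.comp_apply]
  have h1 : QR (lp.single 2 (Sum.inl n) c) = 0 := by
    apply lp.ext; funext b
    rcases b with m | m <;>
      simp [QR, single_coord, lp.coeFn_zero]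
  rw [h1, map_zero]


def ι0 : (ℕ ⊕ ℕ) → (ℤ ⊕ ℤ) := Sum.map (fun n : ℕ => (n : ℤ)) (fun n : ℕ => (n : ℤ))

lemma ι0_inj : Injective ι0 :=
  Function.Injective.sumMap (fun a b h => by exact_mod_cast h) (fun a b h => by exact_mod_cast h)

@[simp] lemma ι0_inl (n : ℕ) : ι0 (.inl n) = .inl (n : ℤ) := rfl
@[simp] lemma ι0_inr (n : ℕ) : ι0 (.inr n) = .inr (n : ℤ) := rfl

variable {H : Type} [NormedAddCommGroup H] [InnerProductSpace ℂ H]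

/-- The isometric embedding of `H` into `ℓ²(ℤ ⊕ ℤ)` induced by a Hilbert basis of `H`
indexed by `ℕ ⊕ ℕ`. -/
def Vli (e : HilbertBasis (ℕ ⊕ ℕ) ℂ H) : H →ₗᵢ[ℂ] K0 :=
  (lpE ι0_inj).comp e.repr.toLinearIsometry

lemma Vli_basis (e : HilbertBasis (ℕ ⊕ ℕ) ℂ H) (i : ℕ ⊕ ℕ) :
    Vli e (e i) = lp.single 2 (ι0 i) 1 := by
  classical
  have h0 : (Vli e) (e i) = lpE ι0_inj (e.repr (e i)) := rfl
  rw [h0, e.repr_self, lpE_single]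

/-- Two continuous linear maps agreeing on a Hilbert basis are equal. -/
lemma clm_ext_basis {F : Type} [NormedAddCommGroup F] [InnerProductSpace ℂ F]
    {ι : Type} (e : HilbertBasis ι ℂ H) {A B : H →L[ℂ] F}
    (h : ∀ i, A (e i) = B (e i)) : A = B := by
  refine ContinuousLinearMap.ext_on
    (Submodule.dense_iff_topologicalClosure_eq_top.2 e.dense_span) ?_
  rintro x ⟨i, rfl⟩
  exact h i

lemma eq_zero_of_inner_basis {ι : Type} (e : HilbertBasis ι ℂ H) {x : H}
    (h : ∀ i, ⟪e i, x⟫ = 0) : x = 0 := by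
  have hx : e.repr x = 0 := by
    apply lp.ext; funext i
    rw [lp.coeFn_zero, Pi.zero_apply, e.repr_apply_apply, h i]
  simpa using e.repr.map_eq_zero_iff.1 hx

end SubAux

/-- Example 4.3: the pair `(U₊ ⊕ 0, 0 ⊕ U₊)` is subnormal and all monomials
`T₁^m T₂^n` are normal (indeed zero), yet the pair is not normal. -/
theorem subnormal_pair_with_normal_monomials_not_normal
    {H : Type} [NormedAddCommGroup H] [InnerProductSpace ℂ H] [CompleteSpace H]
    (e : HilbertBasis (ℕ ⊕ ℕ) ℂ H) (T₁ T₂ : H →L[ℂ] H)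
    (hT₁l : ∀ n : ℕ, T₁ (e (Sum.inl n)) = e (Sum.inl (n + 1)))
    (hT₁r : ∀ n : ℕ, T₁ (e (Sum.inr n)) = 0)
    (hT₂l : ∀ n : ℕ, T₂ (e (Sum.inl n)) = 0)
    (hT₂r : ∀ n : ℕ, T₂ (e (Sum.inr n)) = e (Sum.inr (n + 1))) :
    T₁ * T₂ = T₂ * T₁ ∧ SubnormalPair T₁ T₂ ∧
      (∀ m n : ℕ, 1 ≤ m → 1 ≤ n → T₁ ^ m * T₂ ^ n = 0 ∧
        adjoint (T₁ ^ m * T₂ ^ n) * (T₁ ^ m * T₂ ^ n) =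
          (T₁ ^ m * T₂ ^ n) * adjoint (T₁ ^ m * T₂ ^ n)) ∧
      ¬ adjoint T₁ * T₁ = T₁ * adjoint T₁ := by
  classical
  have h12 : T₁.comp T₂ = 0 := SubAux.clm_ext_basis e (fun i => by
    rcases i with n | n <;>
      simp [hT₂l, hT₂r, hT₁r])
  have h21 : T₂.comp T₁ = 0 := SubAux.clm_ext_basis e (fun i => by
    rcases i with n | n <;>
      simp [hT₁l, hT₁r, hT₂l])
  have h12' : T₁ * T₂ = 0 := h12
  have h21' : T₂ * T₁ = 0 := h21
  refine ⟨by rw [h12', h21'], ?_, ?_, ?_⟩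
  · -- Subnormal pair
    refine ⟨SubAux.K0, inferInstance, inferInstance, inferInstance,
      (SubAux.Vli e).toContinuousLinearMap, SubAux.N₁, SubAux.N₂, ?_,
      SubAux.N₁_comm_N₂, SubAux.N₁_normal, SubAux.N₂_normal, ?_, ?_⟩
    · rw [LinearIsometry.coe_toContinuousLinearMap]
      exact (SubAux.Vli e).isometry
    · refine SubAux.clm_ext_basis e (fun i => ?_)
      rcases i with n | n
      · simp only [ContinuousLinearMap.comp_apply,
          LinearIsometry.coe_toContinuousLinearMap, SubAux.Vli_basis, hT₁l,
          SubAux.ι0_inl]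
        rw [SubAux.N₁_single_inl]
        congr 2

      · simp only [ContinuousLinearMap.comp_apply,
          LinearIsometry.coe_toContinuousLinearMap, SubAux.Vli_basis, hT₁r,
          SubAux.ι0_inr]
        rw [SubAux.N₁_single_inr, map_zero]
    · refine SubAux.clm_ext_basis e (fun i => ?_)
      rcases i with n | n
      · simp only [ContinuousLinearMap.comp_apply,
          LinearIsometry.coe_toContinuousLinearMap, SubAux.Vli_basis, hT₂l,
          SubAux.ι0_inl]
        rw [SubAux.N₂_single_inl, map_zero]
      · simp only [ContinuousLinearMap.comp_apply,
          LinearIsometry.coe_toContinuousLinearMap, SubAux.Vli_basis, hT₂r,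
          SubAux.ι0_inr]
        rw [SubAux.N₂_single_inr]
        congr 2

  · -- monomials vanish, hence normal
    intro m n hm hn
    obtain ⟨a, rfl⟩ : ∃ a, m = a + 1 := ⟨m - 1, by omega⟩
    obtain ⟨b, rfl⟩ : ∃ b, n = b + 1 := ⟨n - 1, by omega⟩
    have hz : T₁ ^ (a + 1) * T₂ ^ (b + 1) = 0 := by
      rw [pow_succ, pow_succ', mul_assoc, ← mul_assoc T₁ T₂, h12', zero_mul, mul_zero]
    exact ⟨hz, by rw [hz]; simp⟩
  · -- T₁ is not normal
    intro hEq
    have hadj : adjoint T₁ (e (Sum.inl 0)) = 0 := by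
      refine SubAux.eq_zero_of_inner_basis e (fun i => ?_)
      rw [ContinuousLinearMap.adjoint_inner_right]
      rcases i with n | n
      · rw [hT₁l, orthonormal_iff_ite.1 e.orthonormal]
        simp
      · rw [hT₁r, inner_zero_left]
    have h0 : adjoint T₁ (T₁ (e (Sum.inl 0))) = 0 := by
      have happ := ContinuousLinearMap.ext_iff.1 hEq (e (Sum.inl 0))
      simp only [ContinuousLinearMap.mul_apply] at happ
      rw [hadj, map_zero] at happ
      exact happ
    have h1 : (inner ℂ (T₁ (e (Sum.inl 0))) (T₁ (e (Sum.inl 0))) : ℂ) = 1 := by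
      rw [hT₁l, orthonormal_iff_ite.1 e.orthonormal]
      simp
    rw [← ContinuousLinearMap.adjoint_inner_right, h0, inner_zero_right] at h1
    exact zero_ne_one h1

end
end

section
/- Let W_α be a subnormal unilateral weighted shift on ℓ²(ℤ₊) with positive weights (αₙ), fix an integer j ≥ 2, and let μ_j be the Berger measure of the restriction of W_α to the closed span L_j of {e_j, e_{j+1}, ⋯}, i.e., the compactly supported Borel probability measure on [0,∞) with ∫ tⁿ dμ_j(t) = (α_j α_{j+1}⋯α_{j+n−1})² for all n ≥ 1. Then 1/t is integrable with respect to μ_j and α_{j−1}² = ( ∫ (1/t) dμ_j(t) )^{−1}; in particular, α_{j−1} is completely determined by μ_j. -/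
open MeasureTheory ContinuousLinearMap
open scoped ComplexOrder ENNReal NNReal

noncomputable section

universe u

/-- The (possibly infinite) integral `∫ 1/t dμ` of the reciprocal function, computed in
`ℝ≥0∞` so that an atom of `μ` at `0` yields the value `∞`. -/
def recipIntegral (μ : Measure ℝ) : ℝ≥0∞ := ∫⁻ t, (ENNReal.ofReal t)⁻¹ ∂μ

/-- a.e. membership in the interval from the null conditions -/
lemma berger_ae_Icc (μ : Measure ℝ) (h0 : μ {t | t < 0} = 0) {M : ℝ}
    (hM : μ {t | M < t} = 0) : ∀ᵐ t ∂μ, t ∈ Set.Icc 0 M := by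
  rw [MeasureTheory.ae_iff]
  refine measure_mono_null (fun t ht => ?_) (measure_union_null h0 hM)
  simp only [Set.mem_setOf_eq, Set.mem_Icc, not_and_or, not_le] at ht
  rcases ht with h | h
  · exact Or.inl h
  · exact Or.inr h

lemma integrable_pow_of_ae_Icc {μ : Measure ℝ} [IsFiniteMeasure μ] {M : ℝ}
    (h : ∀ᵐ t ∂μ, t ∈ Set.Icc 0 M) (n : ℕ) : Integrable (fun t : ℝ => t ^ n) μ := by
  refine Integrable.mono' (integrable_const (M ^ n))
    ((continuous_pow n).aestronglyMeasurable) ?_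
  filter_upwards [h] with t ht
  rw [Real.norm_eq_abs, abs_pow, abs_of_nonneg ht.1]
  exact pow_le_pow_left₀ ht.1 ht.2 n

/-- integral of a polynomial as combination of moments -/
lemma integral_polynomial_eval {μ : Measure ℝ} [IsFiniteMeasure μ] {M : ℝ}
    (h : ∀ᵐ t ∂μ, t ∈ Set.Icc 0 M) (p : Polynomial ℝ) :
    ∫ t, p.eval t ∂μ
      = ∑ i ∈ Finset.range (p.natDegree + 1), p.coeff i * ∫ t, t ^ i ∂μ := by
  have : ∀ t : ℝ, p.eval t = ∑ i ∈ Finset.range (p.natDegree + 1), p.coeff i * t ^ i :=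
    fun t => Polynomial.eval_eq_sum_range t
  simp_rw [this]
  rw [integral_finset_sum]
  · exact Finset.sum_congr rfl fun i _ => integral_const_mul _ _
  · exact fun i _ => (integrable_pow_of_ae_Icc h i).const_mul _

/-- Moment determinacy for compactly supported probability measures on [0, M]. -/
lemma measure_eq_of_moments_eq {μ ν : Measure ℝ} [IsProbabilityMeasure μ]
    [IsProbabilityMeasure ν] {M : ℝ}
    (hμ : ∀ᵐ t ∂μ, t ∈ Set.Icc 0 M) (hν : ∀ᵐ t ∂ν, t ∈ Set.Icc 0 M)
    (hmom : ∀ n : ℕ, ∫ t, t ^ n ∂μ = ∫ t, t ^ n ∂ν) : μ = ν := by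
  have main : ∀ (g : ℝ → ℝ) (C : ℝ), Continuous g → (∀ x, |g x| ≤ C) →
      ∫ t, g t ∂μ = ∫ t, g t ∂ν := by
    intro g C hg hgb
    have hgint : ∀ (ρ : Measure ℝ), IsProbabilityMeasure ρ → Integrable g ρ := by
      intro ρ hρ
      exact Integrable.mono' (integrable_const C) hg.aestronglyMeasurable
        (Filter.Eventually.of_forall fun t => hgb t)
    have hd : ∀ ε : ℝ, 0 < ε → |∫ t, g t ∂μ - ∫ t, g t ∂ν| ≤ 2 * ε := by
      intro ε hε
      obtain ⟨p, hp⟩ := exists_polynomial_near_of_continuousOn 0 M g hg.continuousOn ε hε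
      have hpint : ∀ (ρ : Measure ℝ), IsProbabilityMeasure ρ →
          (∀ᵐ t ∂ρ, t ∈ Set.Icc 0 M) → Integrable (fun t => p.eval t) ρ := by
        intro ρ hρ hae
        refine Integrable.mono' (integrable_const (C + ε))
          (p.continuous_aeval.aestronglyMeasurable) ?_
        filter_upwards [hae] with t ht
        have := hp t ht
        rw [Real.norm_eq_abs]
        calc |p.eval t| ≤ |p.eval t - g t| + |g t| := by
              have := abs_sub_abs_le_abs_sub (p.eval t) (g t); nlinarith [abs_sub (p.eval t) (g t)]
          _ ≤ ε + C := by have := hgb t; linarith [le_of_lt (hp t ht)]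
          _ = C + ε := by ring
      have hpμ := hpint μ inferInstance hμ
      have hpν := hpint ν inferInstance hν
      have hpeq : ∫ t, p.eval t ∂μ = ∫ t, p.eval t ∂ν := by
        rw [integral_polynomial_eval hμ p, integral_polynomial_eval hν p]
        exact Finset.sum_congr rfl fun i _ => by rw [hmom i]
      have est : ∀ (ρ : Measure ℝ), IsProbabilityMeasure ρ → (∀ᵐ t ∂ρ, t ∈ Set.Icc 0 M) →
          Integrable (fun t => p.eval t) ρ → |∫ t, g t ∂ρ - ∫ t, p.eval t ∂ρ| ≤ ε := by
        intro ρ hρ hae hpi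
        rw [← integral_sub (hgint ρ hρ) hpi]
        calc |∫ t, (g t - p.eval t) ∂ρ| ≤ ∫ t, |g t - p.eval t| ∂ρ := by
              simp only [← Real.norm_eq_abs]
              exact norm_integral_le_integral_norm _
          _ ≤ ∫ _t, ε ∂ρ := by
              refine integral_mono_ae ((hgint ρ hρ).sub hpi).abs (integrable_const ε) ?_
              filter_upwards [hae] with t ht
              rw [abs_sub_comm]
              exact le_of_lt (hp t ht)
          _ = ε := by simp [measure_univ]
      have e1 := est μ inferInstance hμ hpμ
      have e2 := est ν inferInstance hν hpν
      calc |∫ t, g t ∂μ - ∫ t, g t ∂ν|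
          = |(∫ t, g t ∂μ - ∫ t, p.eval t ∂μ) - (∫ t, g t ∂ν - ∫ t, p.eval t ∂ν)| := by
            rw [hpeq]; ring_nf
        _ ≤ |∫ t, g t ∂μ - ∫ t, p.eval t ∂μ| + |∫ t, g t ∂ν - ∫ t, p.eval t ∂ν| :=
            abs_sub _ _
        _ ≤ 2 * ε := by linarith
    by_contra hne
    have h0 : 0 < |∫ t, g t ∂μ - ∫ t, g t ∂ν| := by
      rw [abs_pos]; exact sub_ne_zero_of_ne hne
    have := hd (|∫ t, g t ∂μ - ∫ t, g t ∂ν| / 4) (by linarith)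
    linarith
  -- now apply ext
  refine ext_of_forall_lintegral_eq_of_IsFiniteMeasure fun f => ?_
  set g : BoundedContinuousFunction ℝ ℝ :=
    f.comp (fun a : ℝ≥0 => (a : ℝ)) isometry_subtype_coe.lipschitz with hg
  have hgx : ∀ x, g x = ((f x : ℝ≥0) : ℝ) := fun x => rfl
  have hint : ∀ (ρ : Measure ℝ), IsProbabilityMeasure ρ →
      Integrable (fun x => ((f x : ℝ≥0) : ℝ)) ρ := by
    intro ρ hρ
    refine Integrable.mono' (integrable_const ‖g‖) ?_ ?_
    · exact (isometry_subtype_coe.continuous.comp f.continuous).aestronglyMeasurable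
    · exact Filter.Eventually.of_forall fun x => g.norm_coe_le_norm x
  rw [lintegral_coe_eq_integral f (hint μ inferInstance),
    lintegral_coe_eq_integral f (hint ν inferInstance)]
  congr 1
  refine main (fun x => ((f x : ℝ≥0) : ℝ)) ‖g‖
    (isometry_subtype_coe.continuous.comp f.continuous) fun x => ?_
  have h := g.norm_coe_le_norm x
  rw [Real.norm_eq_abs, hgx] at h
  exact h

/-- Corollary 3.2: for a subnormal unilateral weighted shift, the weight `α_{j-1}` is
completely determined by the Berger measure of the restriction to `L_j`, via
`α_{j-1}² = (∫ 1/t dμ_j)⁻¹`. -/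
theorem weight_determined_by_restricted_berger_measure
    (α : ℕ → ℝ) (hαpos : ∀ n, 0 < α n) (hαbdd : ∃ C : ℝ, ∀ n, α n ≤ C)
    (hsub : ∃ ξ : Measure ℝ, IsBergerMeasure α ξ)
    (j : ℕ) (hj : 2 ≤ j)
    (μj : Measure ℝ) (hμj : IsBergerMeasure (fun n => α (j + n)) μj) :
    recipIntegral μj ≠ ⊤ ∧ (α (j - 1)) ^ 2 = ((recipIntegral μj).toReal)⁻¹ := by
  obtain ⟨ξ, hξprob, hξ0, ⟨M₀, hξM⟩, hξmom⟩ := hsub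
  obtain ⟨hμprob, hμ0, ⟨M₁, hμM⟩, hμmom⟩ := hμj
  haveI := hξprob; haveI := hμprob
  set γ : ℕ → ℝ := fun n => ∏ i ∈ Finset.range n, α i ^ 2 with hγ
  have hγpos : ∀ n, 0 < γ n := fun n => Finset.prod_pos fun i _ => pow_pos (hαpos i) 2
  set M : ℝ := max M₀ M₁ with hM
  have hξM' : ξ {t | M < t} = 0 :=
    measure_mono_null (fun t ht => lt_of_le_of_lt (le_max_left M₀ M₁) ht) hξM
  have hμM' : μj {t | M < t} = 0 :=
    measure_mono_null (fun t ht => lt_of_le_of_lt (le_max_right M₀ M₁) ht) hμM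
  have hξae := berger_ae_Icc ξ hξ0 hξM'
  have hμae := berger_ae_Icc μj hμ0 hμM'
  -- the candidate measure
  set d : ℝ → ℝ≥0 := fun t => Real.toNNReal (t ^ j) with hdd
  have hd : Measurable d := (measurable_id.pow_const j).real_toNNReal
  set ν : Measure ℝ := (ENNReal.ofReal (γ j))⁻¹ • ξ.withDensity (fun t => (d t : ℝ≥0∞))
    with hν
  have hcoe : ∀ t : ℝ, ((d t : ℝ≥0) : ℝ≥0∞) = ENNReal.ofReal (t ^ j) := fun t => rfl
  have hγj0 : ENNReal.ofReal (γ j) ≠ 0 := by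
    simp [ENNReal.ofReal_eq_zero, not_le, hγpos j]
  have hγjtop : ENNReal.ofReal (γ j) ≠ ⊤ := ENNReal.ofReal_ne_top
  -- basic integral computation against ν
  have hνint : ∀ n : ℕ, ∫ t, t ^ n ∂ν = γ (j + n) / γ j := by
    intro n
    rw [hν, integral_smul_measure, integral_withDensity_eq_integral_smul hd]
    have h1 : ∫ t, d t • t ^ n ∂ξ = ∫ t, t ^ (j + n) ∂ξ := by
      refine integral_congr_ae ?_
      filter_upwards [hξae] with t ht
      simp only [hdd, NNReal.smul_def, smul_eq_mul, Real.coe_toNNReal _ (pow_nonneg ht.1 j), pow_add]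
    rw [h1, hξmom (j + n) (by omega)]
    rw [ENNReal.toReal_inv, ENNReal.toReal_ofReal (hγpos j).le]
    simp only [smul_eq_mul]
    rw [inv_mul_eq_div]
  -- ν is a probability measure
  have hξint : ∀ n : ℕ, Integrable (fun t : ℝ => t ^ n) ξ := integrable_pow_of_ae_Icc hξae
  have hlin : ∀ n : ℕ, 1 ≤ n → ∫⁻ t, ENNReal.ofReal (t ^ n) ∂ξ = ENNReal.ofReal (γ n) := by
    intro n hn
    rw [← ofReal_integral_eq_lintegral_ofReal (hξint n) ?_, hξmom n hn]
    filter_upwards [hξae] with t ht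
    exact pow_nonneg ht.1 n
  have hνuniv : ν Set.univ = 1 := by
    rw [hν, Measure.smul_apply, withDensity_apply _ MeasurableSet.univ,
      Measure.restrict_univ, smul_eq_mul]
    simp_rw [hcoe]
    rw [hlin j (by omega), ENNReal.inv_mul_cancel hγj0 hγjtop]
  haveI hνprob : IsProbabilityMeasure ν := ⟨hνuniv⟩
  have hνnull : ∀ s : Set ℝ, ξ s = 0 → ν s = 0 := by
    intro s hs
    rw [hν, Measure.smul_apply, (withDensity_absolutelyContinuous ξ _) hs, smul_zero]
  have hνae : ∀ᵐ t ∂ν, t ∈ Set.Icc 0 M :=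
    berger_ae_Icc ν (hνnull _ hξ0) (hνnull _ hξM')
  -- μj = ν by moment determinacy
  have hμν : μj = ν := by
    refine measure_eq_of_moments_eq hμae hνae fun n => ?_
    rcases Nat.eq_zero_or_pos n with hn | hn
    · subst hn; simp [measure_univ]
    · rw [hμmom n hn, hνint n]
      have hsum : γ (j + n) = γ j * ∏ i ∈ Finset.range n, α (j + i) ^ 2 :=
        Finset.prod_range_add (fun i => α i ^ 2) j n
      rw [hsum, mul_comm (γ j), mul_div_assoc, div_self (hγpos j).ne', mul_one]
  -- compute recipIntegral ν
  have hmeas : Measurable fun t : ℝ => (ENNReal.ofReal t)⁻¹ :=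
    ENNReal.measurable_ofReal.inv
  have hrecip : recipIntegral ν = (ENNReal.ofReal ((α (j - 1)) ^ 2))⁻¹ := by
    rw [recipIntegral, hν, lintegral_smul_measure,
      lintegral_withDensity_eq_lintegral_mul ξ (hd.coe_nnreal_ennreal) hmeas]
    have h2 : ∫⁻ t, ((fun t => ((d t : ℝ≥0) : ℝ≥0∞)) * fun t => (ENNReal.ofReal t)⁻¹) t ∂ξ
        = ∫⁻ t, ENNReal.ofReal (t ^ (j - 1)) ∂ξ := by
      refine lintegral_congr_ae ?_
      filter_upwards [hξae] with t ht
      simp only [Pi.mul_apply, hcoe]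
      rcases eq_or_lt_of_le ht.1 with h0 | h0
      · rw [← h0]
        rw [zero_pow (by omega : j ≠ 0), zero_pow (by omega : j - 1 ≠ 0)]
        simp
      · have hj1 : t ^ j = t ^ (j - 1) * t := by
          rw [← pow_succ]
          congr 1
          omega
        rw [hj1, ENNReal.ofReal_mul (pow_nonneg ht.1 _), mul_assoc,
          ENNReal.mul_inv_cancel (by simp [h0]) ENNReal.ofReal_ne_top, mul_one]
    rw [h2, hlin (j - 1) (by omega)]
    have hsplit : γ j = γ (j - 1) * α (j - 1) ^ 2 := by
      have hj1 : j = (j - 1) + 1 := by omega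
      rw [hj1, hγ]
      simp [Finset.prod_range_succ]
    have ha0 : ENNReal.ofReal (γ (j - 1)) ≠ 0 := by
      simp [ENNReal.ofReal_eq_zero, not_le, hγpos (j - 1)]
    have hatop : ENNReal.ofReal (γ (j - 1)) ≠ ⊤ := ENNReal.ofReal_ne_top
    rw [hsplit, ENNReal.ofReal_mul (hγpos (j - 1)).le,
      ENNReal.mul_inv (Or.inl ha0) (Or.inl hatop),
      mul_comm (ENNReal.ofReal (γ (j - 1)))⁻¹, smul_eq_mul, mul_assoc,
      ENNReal.inv_mul_cancel ha0 hatop, mul_one]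
  rw [hμν, hrecip]
  have hb0 : ENNReal.ofReal (α (j - 1) ^ 2) ≠ 0 := by
    simp [ENNReal.ofReal_eq_zero, not_le, pow_pos (hαpos (j - 1)) 2, (hαpos (j - 1)).ne']
  refine ⟨ENNReal.inv_ne_top.mpr hb0, ?_⟩
  rw [ENNReal.toReal_inv, ENNReal.toReal_ofReal (by positivity), inv_inv]


end
end
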